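/- (Lemma 3, case of the paraboloid.) Let n ≥ 2, 0 < α < 2 and 1 ≤ p ≤ n/α. Suppose there exists a constant C > 0 such that ∫_{ℝⁿ} |u(x', x_n)|² V(x', x_n) dx' dx_n ≤ C ‖V‖_{𝓛^{α,p}} ‖f‖_{L²(ℝ^{n-1})}² for every f ∈ L²(ℝ^{n-1}) with f̂ supported in [0,1]^{n-1} and every measurable V : ℝⁿ → [0,∞), where u(x', t) = ∫_{ℝ^{n-1}} e^{-πit|ξ|² + 2πi x'·ξ} f̂(ξ) dξ. Then 1/p ≤ 2(α-1)/(n-1). -/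

import Mathlib

open Real MeasureTheory ENNReal

/-- The Morrey–Campanato norm
`‖V‖_{𝓛^{α,p}} = sup_{x,r>0} r^α (r^{-n} ∫_{B(x,r)} V^p)^{1/p}` (valued in `ℝ≥0∞`). -/
noncomputable def morreyNorm (n : ℕ) (α p : ℝ) (V : EuclideanSpace ℝ (Fin n) → ℝ) : ℝ≥0∞ :=
  ⨆ (x : EuclideanSpace ℝ (Fin n)) (r : ℝ) (_ : 0 < r),
    ENNReal.ofReal (r ^ α) *
      (ENNReal.ofReal (r ^ (-(n : ℝ))) *
        ∫⁻ y in Metric.ball x r, ENNReal.ofReal (V y ^ p)) ^ (1/p)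

/-- The solution of the free Schrödinger equation with Fourier data `F`:
`u(x',t) = ∫_{ℝ^{n-1}} e^{-πit|ξ|² + 2πi x'·ξ} F(ξ) dξ`. -/
noncomputable def schrodingerExt (n : ℕ) (F : EuclideanSpace ℝ (Fin (n-1)) → ℂ)
    (x : EuclideanSpace ℝ (Fin (n-1))) (t : ℝ) : ℂ :=
  ∫ ξ : EuclideanSpace ℝ (Fin (n-1)),
    Complex.exp (((-(π * t * ‖ξ‖ ^ 2) + 2 * π * (inner ℝ x ξ : ℝ) : ℝ) : ℂ) * Complex.I) * F ξ



lemma coord_le_norm (m : ℕ) (z : EuclideanSpace ℝ (Fin m)) (i : Fin m) : |z i| ≤ ‖z‖ := by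
  rw [EuclideanSpace.norm_eq, ← Real.sqrt_sq_eq_abs]
  apply Real.sqrt_le_sqrt
  calc z i ^ 2 = ‖z i‖ ^ 2 := by simp [Real.norm_eq_abs, sq_abs]
    _ ≤ ∑ j, ‖z j‖ ^ 2 := Finset.single_le_sum (f := fun j => ‖z j‖ ^ 2)
        (fun j _ => sq_nonneg _) (Finset.mem_univ i)

lemma sq_norm_le (m : ℕ) (z : EuclideanSpace ℝ (Fin m)) (b : ℝ) (h : ∀ i, |z i| ≤ b) :
    ‖z‖ ^ 2 ≤ (m : ℝ) * b ^ 2 := by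
  rw [EuclideanSpace.norm_eq, Real.sq_sqrt (by positivity)]
  calc ∑ i, ‖z i‖ ^ 2 ≤ ∑ _i : Fin m, b ^ 2 := by
        apply Finset.sum_le_sum; intro i _
        rw [Real.norm_eq_abs]
        exact pow_le_pow_left₀ (abs_nonneg _) (h i) 2
    _ = (m : ℝ) * b ^ 2 := by simp [Finset.sum_const]

lemma norm_le_of_coords' (m : ℕ) (hm : 1 ≤ m) (z : EuclideanSpace ℝ (Fin m)) (b : ℝ) (hb : 0 ≤ b)
    (h : ∀ i, |z i| ≤ b) : ‖z‖ ≤ (m : ℝ) * b := by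
  have h2 := sq_norm_le m z b h
  have hm1 : (1:ℝ) ≤ (m:ℝ) := by exact_mod_cast hm
  nlinarith [norm_nonneg z, mul_nonneg (Nat.cast_nonneg (α := ℝ) m) hb]

section ExtLower
variable (m : ℕ)

noncomputable def cubeS (δ : ℝ) : Set (EuclideanSpace ℝ (Fin m)) :=
  (@WithLp.ofLp 2 (Fin m → ℝ)) ⁻¹' Set.pi Set.univ (fun _ => Set.Icc 0 δ)

lemma cubeS_meas (δ : ℝ) : MeasurableSet (cubeS m δ) :=
  WithLp.measurable_ofLp 2 _ (MeasurableSet.univ_pi (fun _ => measurableSet_Icc))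

lemma cubeS_vol (δ : ℝ) (hδ : 0 ≤ δ) : volume (cubeS m δ) = ENNReal.ofReal δ ^ m := by
  rw [← ((EuclideanSpace.volume_preserving_symm_measurableEquiv_toLp (Fin m)).symm).measure_preimage
    (cubeS_meas m δ).nullMeasurableSet]
  have : (MeasurableEquiv.toLp 2 (Fin m → ℝ)).symm.symm ⁻¹' (cubeS m δ)
      = Set.pi Set.univ (fun _ : Fin m => Set.Icc 0 δ) := rfl
  rw [this, volume_pi_pi]
  simp [Real.volume_Icc, hδ]

lemma phase_bound (hm : 1 ≤ m) (δ : ℝ) (hδ0 : 0 < δ)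
    (x : EuclideanSpace ℝ (Fin m)) (t : ℝ)
    (hx : ‖x‖ ≤ (1/(20*m)) * δ⁻¹) (ht : |t| ≤ (1/(20*m)) * δ⁻¹^2)
    (ξ : EuclideanSpace ℝ (Fin m)) (hξ : ξ ∈ cubeS m δ) :
    |(-(π * t * ‖ξ‖ ^ 2) + 2 * π * (inner ℝ x ξ : ℝ) : ℝ)| ≤ π/3 := by
  have hmR : (1:ℝ) ≤ (m:ℝ) := by exact_mod_cast hm
  have hcoord : ∀ i, |ξ i| ≤ δ := by
    intro i
    have := hξ i (Set.mem_univ i)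
    simp only [Set.mem_Icc] at this
    rw [abs_le]; constructor <;> linarith [this.1, this.2]
  have hξ2 : ‖ξ‖ ^ 2 ≤ (m:ℝ) * δ ^ 2 := sq_norm_le m ξ δ hcoord
  have hξn : ‖ξ‖ ≤ (m:ℝ) * δ := norm_le_of_coords' m hm ξ δ hδ0.le hcoord
  have hπ := Real.pi_pos
  have hmpos : (0:ℝ) < 20 * m := by positivity
  have h1 : |(-(π * t * ‖ξ‖ ^ 2))| ≤ π/20 := by
    rw [abs_neg, abs_mul, abs_mul, abs_of_nonneg hπ.le, abs_of_nonneg (sq_nonneg ‖ξ‖)]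
    calc π * |t| * ‖ξ‖^2 ≤ π * ((1/(20*m)) * δ⁻¹^2) * ((m:ℝ) * δ^2) := by
          apply mul_le_mul (by apply mul_le_mul_of_nonneg_left ht hπ.le) hξ2 (sq_nonneg _)
          positivity
      _ = π/20 := by field_simp
  have hinner : |(inner ℝ x ξ : ℝ)| ≤ ‖x‖ * ‖ξ‖ := abs_real_inner_le_norm x ξ
  have h2 : |2 * π * (inner ℝ x ξ : ℝ)| ≤ π/10 := by
    rw [abs_mul]
    have : |(2:ℝ) * π| = 2 * π := abs_of_nonneg (by positivity)
    rw [this]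
    calc 2*π * |(inner ℝ x ξ : ℝ)| ≤ 2*π * (((1/(20*m)) * δ⁻¹) * ((m:ℝ) * δ)) := by
          apply mul_le_mul_of_nonneg_left _ (by positivity)
          calc |(inner ℝ x ξ : ℝ)| ≤ ‖x‖ * ‖ξ‖ := hinner
            _ ≤ ((1/(20*m)) * δ⁻¹) * ((m:ℝ) * δ) :=
              mul_le_mul hx hξn (norm_nonneg _) (by positivity)
      _ = π/10 := by field_simp; ring
  calc |(-(π * t * ‖ξ‖ ^ 2) + 2 * π * (inner ℝ x ξ : ℝ) : ℝ)|
      ≤ |(-(π * t * ‖ξ‖ ^ 2))| + |2 * π * (inner ℝ x ξ : ℝ)| := abs_add_le _ _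
    _ ≤ π/20 + π/10 := add_le_add h1 h2
    _ ≤ π/3 := by linarith

end ExtLower

lemma cos_ge_half (r : ℝ) (h : |r| ≤ π/3) : 1/2 ≤ Real.cos r := by
  rw [← Real.cos_abs]
  have : Real.cos (π/3) ≤ Real.cos |r| :=
    Real.cos_le_cos_of_nonneg_of_le_pi (abs_nonneg r) (by linarith [Real.pi_pos]) h
  rw [Real.cos_pi_div_three] at this
  linarith

lemma ext_lower (m : ℕ) (hm : 1 ≤ m) (δ : ℝ) (hδ0 : 0 < δ)
    (x : EuclideanSpace ℝ (Fin m)) (t : ℝ)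
    (hx : ‖x‖ ≤ (1/(20*m)) * δ⁻¹) (ht : |t| ≤ (1/(20*m)) * δ⁻¹^2) :
    δ ^ m / 2 ≤
      ‖∫ ξ : EuclideanSpace ℝ (Fin m),
        Complex.exp (((-(π * t * ‖ξ‖ ^ 2) + 2 * π * (inner ℝ x ξ : ℝ) : ℝ) : ℂ) * Complex.I) *
          (cubeS m δ).indicator (fun _ => (1:ℂ)) ξ‖ := by
  set φ : EuclideanSpace ℝ (Fin m) → ℝ :=
    fun ξ => (-(π * t * ‖ξ‖ ^ 2) + 2 * π * (inner ℝ x ξ : ℝ) : ℝ) with hφ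
  set f : EuclideanSpace ℝ (Fin m) → ℂ :=
    fun ξ => Complex.exp (((φ ξ : ℝ) : ℂ) * Complex.I) with hf
  have hcontφ : Continuous φ := by
    apply Continuous.add
    · exact ((continuous_const.mul ((continuous_norm).pow 2))).neg
    · exact continuous_const.mul (Continuous.inner continuous_const continuous_id)
  have hcontf : Continuous f :=
    Complex.continuous_exp.comp ((Complex.continuous_ofReal.comp hcontφ).mul continuous_const)
  have heq : (fun ξ => Complex.exp (((φ ξ : ℝ) : ℂ) * Complex.I) *
      (cubeS m δ).indicator (fun _ => (1:ℂ)) ξ) = (cubeS m δ).indicator f := by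
    funext ξ
    by_cases hξ : ξ ∈ cubeS m δ <;> simp [Set.indicator_apply, hξ, hf]
  rw [heq, integral_indicator (cubeS_meas m δ)]
  have hvol : volume (cubeS m δ) = ENNReal.ofReal δ ^ m := cubeS_vol m δ hδ0.le
  have hvolfin : volume (cubeS m δ) ≠ ⊤ := by rw [hvol]; exact (ENNReal.pow_ne_top ofReal_ne_top)
  have hint : IntegrableOn f (cubeS m δ) volume := by
    apply Measure.integrableOn_of_bounded (M := 1) hvolfin hcontf.aestronglyMeasurable
    filter_upwards with ξ
    simp [hf, Complex.norm_exp]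
  have hre : (∫ ξ in cubeS m δ, f ξ).re = ∫ ξ in cubeS m δ, (f ξ).re := by
    have := integral_re hint
    simp only [RCLike.re_to_complex] at this
    exact this.symm
  have hfre : ∀ ξ, (f ξ).re = Real.cos (φ ξ) := by
    intro ξ
    rw [hf]; simp only [Complex.exp_mul_I]
    simp [Complex.cos_ofReal_re]
  have hmono : δ ^ m * (1/2) ≤ ∫ ξ in cubeS m δ, (f ξ).re := by
    have h1 : ∫ ξ in cubeS m δ, (1/2 : ℝ) = δ ^ m * (1/2) := by
      rw [setIntegral_const]
      rw [measureReal_def, hvol, smul_eq_mul]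
      congr 1
      rw [ENNReal.toReal_pow, ENNReal.toReal_ofReal hδ0.le]
    rw [← h1]
    apply setIntegral_mono_on (integrableOn_const hvolfin) hint.re
      (cubeS_meas m δ)
    intro ξ hξ
    show 1/2 ≤ (f ξ).re
    rw [hfre ξ]
    exact cos_ge_half (φ ξ) (phase_bound m hm δ hδ0 x t hx ht ξ hξ)
  calc δ ^ m / 2 = δ ^ m * (1/2) := by ring
    _ ≤ (∫ ξ in cubeS m δ, f ξ).re := by rw [hre]; simpa using hmono
    _ ≤ ‖∫ ξ in cubeS m δ, f ξ‖ := Complex.re_le_norm _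

lemma key_real (m : ℕ) (α p s r : ℝ) (hα : 0 < α) (hp : 1 ≤ p)
    (hαp : α * p ≤ (m:ℝ) + 1) (hs : 1 ≤ s) (hr : 0 < r) :
    r ^ α * (r ^ (-((m:ℝ) + 1)) * (min r s ^ (m:ℝ) * min r (s ^ 2))) ^ (1/p)
      ≤ max (s ^ α) (s ^ (2*α - (m:ℝ)/p)) := by
  have hs0 : (0:ℝ) < s := lt_of_lt_of_le one_pos hs
  have hp0 : (0:ℝ) < p := lt_of_lt_of_le one_pos hp
  set R := Real.log r with hR
  set S := Real.log s with hS
  have hrR : r = Real.exp R := (Real.exp_log hr).symm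
  have hsS : s = Real.exp S := (Real.exp_log hs0).symm
  have hS0 : 0 ≤ S := Real.log_nonneg hs
  have hq0 : 0 < 1/p := by positivity
  have hpq : p * (1/p) = 1 := by field_simp
  rw [hrR, hsS]
  have hmin1 : min (Real.exp R) (Real.exp S) = Real.exp (min R S) :=
    (Real.exp_monotone.map_min).symm
  have hmin2 : min (Real.exp R) (Real.exp S ^ 2) = Real.exp (min R (2*S)) := by
    rw [← Real.exp_nat_mul]
    rw [(Real.exp_monotone.map_min).symm]
    norm_num
  have hmax : max (Real.exp S ^ α) (Real.exp S ^ (2*α - (m:ℝ)/p))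
      = Real.exp (max (S * α) (S * (2*α - (m:ℝ)/p))) := by
    rw [Real.rpow_def_of_pos (Real.exp_pos _), Real.rpow_def_of_pos (Real.exp_pos _),
      Real.log_exp, (Real.exp_monotone.map_max).symm]
  rw [hmin1, hmin2, hmax]
  simp only [← Real.exp_mul, ← Real.exp_add]
  rw [Real.exp_le_exp]
  -- now a linear goal
  have hc3 : α ≤ ((m:ℝ)+1) * (1/p) := by
    calc α = α * p * (1/p) := by field_simp
      _ ≤ ((m:ℝ)+1) * (1/p) := by
        apply mul_le_mul_of_nonneg_right hαp hq0.le
  rcases le_total R S with h1 | h1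
  · have h2 : R ≤ 2*S := by linarith
    rw [min_eq_left h1, min_eq_left h2]
    apply le_max_of_le_left
    have : R * (-((m:ℝ)+1)) + (R * m + R) = 0 := by push_cast; ring
    have e1 : R * α + (R * (-((m:ℝ)+1)) + (R * (m:ℝ) + R)) * (1/p) = R * α := by
      rw [this]; ring
    rw [e1]
    nlinarith
  · rcases le_total R (2*S) with h2 | h2
    · rw [min_eq_right h1, min_eq_left h2]
      rcases le_total ((m:ℝ)) (α * p) with hc | hc
      · have hmq : (m:ℝ) * (1/p) ≤ α := by
          calc (m:ℝ) * (1/p) ≤ α * p * (1/p) := mul_le_mul_of_nonneg_right hc hq0.le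
            _ = α := by field_simp
        apply le_max_of_le_right
        have expand : S * (2*α - (m:ℝ)/p) - (R * α + (R * (-((m:ℝ)+1)) + (S * (m:ℝ) + R)) * (1/p))
            = (2*S - R) * (α - (m:ℝ) * (1/p)) := by
          field_simp; ring
        nlinarith [mul_nonneg (by linarith : (0:ℝ) ≤ 2*S - R) (by linarith : (0:ℝ) ≤ α - (m:ℝ) * (1/p))]
      · have hmq : α ≤ (m:ℝ) * (1/p) := by
          calc α = α * p * (1/p) := by field_simp
            _ ≤ (m:ℝ) * (1/p) := mul_le_mul_of_nonneg_right hc hq0.le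
        apply le_max_of_le_left
        have expand : S * α - (R * α + (R * (-((m:ℝ)+1)) + (S * (m:ℝ) + R)) * (1/p))
            = (R - S) * ((m:ℝ) * (1/p) - α) := by
          field_simp; ring
        nlinarith [mul_nonneg (by linarith : (0:ℝ) ≤ R - S) (by linarith : (0:ℝ) ≤ (m:ℝ) * (1/p) - α)]
    · rw [min_eq_right h1, min_eq_right h2]
      have key : R * α + (R * (-((m:ℝ)+1)) + (S * (m:ℝ) + 2*S)) * (1/p)
          ≤ S * (2*α - (m:ℝ)/p) := by
        have expand : S * (2*α - (m:ℝ)/p) - (R * α + (R * (-((m:ℝ)+1)) + (S * (m:ℝ) + 2*S)) * (1/p))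
            = (R - 2*S) * (((m:ℝ)+1) * (1/p) - α) := by
          field_simp
          ring
        nlinarith [mul_nonneg (by linarith : (0:ℝ) ≤ R - 2*S) (by linarith [hc3] : (0:ℝ) ≤ ((m:ℝ)+1) * (1/p) - α)]
      exact le_trans key (le_max_right _ _)

lemma ofReal_min' (u v : ℝ) : min (ENNReal.ofReal u) (ENNReal.ofReal v) = ENNReal.ofReal (min u v) := by
  rcases le_total u v with h | h
  · rw [min_eq_left h, min_eq_left (ENNReal.ofReal_le_ofReal h)]
  · rw [min_eq_right h, min_eq_right (ENNReal.ofReal_le_ofReal h)]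

lemma key_real2 (m : ℕ) (α p s r B : ℝ) (hα : 0 < α) (hp : 1 ≤ p)
    (hαp : α * p ≤ (m:ℝ) + 1) (hs : 1 ≤ s) (hr : 0 < r) (hB : 1 ≤ B) :
    r ^ α * (r ^ (-((m:ℝ) + 1)) * (B ^ (m+1) * (min r s ^ m * min r (s ^ 2)))) ^ (1/p)
      ≤ B ^ (((m:ℝ) + 1)) * max (s ^ α) (s ^ (2*α - (m:ℝ)/p)) := by
  have hp0 : (0:ℝ) < p := lt_of_lt_of_le one_pos hp
  have hs0 : (0:ℝ) < s := lt_of_lt_of_le one_pos hs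
  have hB0 : (0:ℝ) < B := lt_of_lt_of_le one_pos hB
  have hmin0 : 0 < min r s := lt_min hr hs0
  have hq : (0:ℝ) ≤ 1/p := by positivity
  have e1 : r ^ (-((m:ℝ) + 1)) * (B ^ (m+1) * (min r s ^ m * min r (s ^ 2)))
      = B ^ (m+1) * (r ^ (-((m:ℝ) + 1)) * (min r s ^ m * min r (s ^ 2))) := by ring
  rw [e1, Real.mul_rpow (by positivity) (by positivity)]
  have e2 : ((B:ℝ) ^ (m+1)) ^ (1/p) ≤ B ^ (((m:ℝ)+1)) := by
    rw [← Real.rpow_natCast B (m+1), ← Real.rpow_mul hB0.le]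
    apply Real.rpow_le_rpow_of_exponent_le hB
    push_cast
    have h1p : 1/p ≤ 1 := by
      rw [div_le_one hp0]; exact hp
    nlinarith
  calc r ^ α * (((B:ℝ) ^ (m+1)) ^ (1/p) * (r ^ (-((m:ℝ) + 1)) * (min r s ^ m * min r (s ^ 2))) ^ (1/p))
      = ((B:ℝ) ^ (m+1)) ^ (1/p) * (r ^ α * (r ^ (-((m:ℝ) + 1)) * (min r s ^ m * min r (s ^ 2))) ^ (1/p)) := by ring
    _ ≤ B ^ (((m:ℝ)+1)) * max (s ^ α) (s ^ (2*α - (m:ℝ)/p)) := by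
        apply mul_le_mul e2 _ (by positivity) (by positivity)
        rw [show (min r s : ℝ) ^ m = min r s ^ (m:ℝ) by rw [Real.rpow_natCast]]
        exact key_real m α p s r hα hp hαp hs hr





noncomputable def tubeL (m : ℕ) (a c s : ℝ) (j : Fin (m+1)) : ℝ :=
  if (j:ℕ) < m then a*s else c*s^2

noncomputable def tubeT (m : ℕ) (a c s : ℝ) : Set (EuclideanSpace ℝ (Fin (m+1))) :=
  (@WithLp.ofLp 2 (Fin (m+1) → ℝ)) ⁻¹' Set.pi Set.univ (fun j => Set.Icc (-(tubeL m a c s j)) (tubeL m a c s j))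

lemma tubeT_meas (m : ℕ) (a c s : ℝ) : MeasurableSet (tubeT m a c s) :=
  WithLp.measurable_ofLp 2 _ (MeasurableSet.univ_pi fun _ => measurableSet_Icc)

lemma vol_pi_eucl (k : ℕ) (S : Set (EuclideanSpace ℝ (Fin k))) (I : Fin k → Set ℝ)
    (hSI : S = (@WithLp.ofLp 2 (Fin k → ℝ)) ⁻¹' Set.pi Set.univ I) (hI : ∀ i, MeasurableSet (I i)) :
    volume S = ∏ i, volume (I i) := by
  have hS : MeasurableSet S := by rw [hSI]; exact WithLp.measurable_ofLp 2 _ (MeasurableSet.univ_pi hI)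
  rw [← ((EuclideanSpace.volume_preserving_symm_measurableEquiv_toLp (Fin k)).symm).measure_preimage
    hS.nullMeasurableSet]
  have : (MeasurableEquiv.toLp 2 (Fin k → ℝ)).symm.symm ⁻¹' S = Set.pi Set.univ I := by
    rw [hSI]; rfl
  rw [this, volume_pi_pi]

lemma tubeT_vol (m : ℕ) (a c s : ℝ) :
    volume (tubeT m a c s) = ENNReal.ofReal (2*(a*s)) ^ m * ENNReal.ofReal (2*(c*s^2)) := by
  rw [vol_pi_eucl _ _ _ (by rw [tubeT]) (fun _ => measurableSet_Icc)]
  rw [Fin.prod_univ_castSucc]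
  congr 1
  · calc ∏ j : Fin m, volume (Set.Icc (-(tubeL m a c s (Fin.castSucc j))) (tubeL m a c s (Fin.castSucc j)))
        = ∏ _j : Fin m, ENNReal.ofReal (2*(a*s)) := by
          apply Finset.prod_congr rfl
          intro j _
          rw [Real.volume_Icc]
          simp only [tubeL, Fin.coe_castSucc, j.isLt, if_true]
          congr 1; ring
      _ = ENNReal.ofReal (2*(a*s)) ^ m := by
          rw [Finset.prod_const, Finset.card_univ, Fintype.card_fin]
  · rw [Real.volume_Icc]
    simp only [tubeL, Fin.val_last, lt_irrefl, if_false]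
    congr 1; ring

lemma morrey_bound (m : ℕ) (α p a c s : ℝ) (hα : 0 < α) (hp : 1 ≤ p)
    (hαp : α * p ≤ (m:ℝ)+1) (ha : 0 < a) (hc : 0 < c) (hs : 1 ≤ s) :
    morreyNorm (m+1) α p ((tubeT m a c s).indicator (fun _ => (1:ℝ))) ≤
      ENNReal.ofReal ((max 2 (max (2*a) (2*c))) ^ (((m:ℝ)+1)) *
        max (s ^ α) (s ^ (2*α - (m:ℝ)/p))) := by
  have hp0 : (0:ℝ) < p := lt_of_lt_of_le one_pos hp
  have hs0 : (0:ℝ) < s := lt_of_lt_of_le one_pos hs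
  set B : ℝ := max 2 (max (2*a) (2*c)) with hB
  have hB1 : (1:ℝ) ≤ B := le_trans one_le_two (le_max_left _ _)
  set T := tubeT m a c s with hT
  set V : EuclideanSpace ℝ (Fin (m+1)) → ℝ := T.indicator (fun _ => (1:ℝ)) with hV
  rw [morreyNorm]
  apply iSup_le; intro x
  apply iSup_le; intro r
  apply iSup_le; intro hr
  -- step 1: the lintegral is the volume of the intersection
  have hVy : ∀ y, ENNReal.ofReal (V y ^ p) = T.indicator (fun _ => (1:ℝ≥0∞)) y := by
    intro y
    by_cases hy : y ∈ T <;>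
      simp [hV, Set.indicator_apply, hy, Real.one_rpow, Real.zero_rpow (ne_of_gt hp0)]
  have hlint : ∫⁻ y in Metric.ball x r, ENNReal.ofReal (V y ^ p)
      = volume (T ∩ Metric.ball x r) := by
    rw [lintegral_congr hVy, lintegral_indicator (tubeT_meas m a c s), setLIntegral_one,
      Measure.restrict_apply (tubeT_meas m a c s)]
  -- step 2: bound the volume of the intersection
  have hsub : T ∩ Metric.ball x r ⊆
      ((@WithLp.ofLp 2 (Fin (m+1) → ℝ)) ⁻¹' Set.pi Set.univ (fun j => Set.Icc (-(tubeL m a c s j)) (tubeL m a c s j)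
        ∩ Set.Icc (x j - r) (x j + r)) : Set (EuclideanSpace ℝ (Fin (m+1)))) := by
    rintro z ⟨hzT, hzB⟩ j _
    refine ⟨hzT j (Set.mem_univ j), ?_⟩
    have h1 : |z j - x j| ≤ ‖z - x‖ := by
      have := coord_le_norm (m+1) (z - x) j
      simpa using this
    have h2 : ‖z - x‖ < r := by
      rw [← dist_eq_norm]; exact Metric.mem_ball.mp hzB
    rw [abs_le] at h1
    constructor <;> [linarith [h1.1]; linarith [h1.2]]
  have hvolbound : volume (T ∩ Metric.ball x r)
      ≤ ENNReal.ofReal (B ^ (m+1) * (min r s ^ m * min r (s^2))) := by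
    calc volume (T ∩ Metric.ball x r)
        ≤ (volume : Measure (EuclideanSpace ℝ (Fin (m+1))))
            ((@WithLp.ofLp 2 (Fin (m+1) → ℝ)) ⁻¹' Set.pi Set.univ (fun j => Set.Icc (-(tubeL m a c s j)) (tubeL m a c s j)
            ∩ Set.Icc (x j - r) (x j + r))) :=
          measure_mono hsub
      _ = ∏ j, volume (Set.Icc (-(tubeL m a c s j)) (tubeL m a c s j)
            ∩ Set.Icc (x j - r) (x j + r)) :=
          vol_pi_eucl _ _ _ rfl (fun j => (measurableSet_Icc.inter measurableSet_Icc))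
      _ ≤ ∏ j, ENNReal.ofReal (min (2 * tubeL m a c s j) (2*r)) := by
          apply Finset.prod_le_prod' ; intro j _
          rw [← ofReal_min']
          apply le_min
          · calc volume _ ≤ volume (Set.Icc (-(tubeL m a c s j)) (tubeL m a c s j)) :=
                measure_mono Set.inter_subset_left
              _ = ENNReal.ofReal (2 * tubeL m a c s j) := by rw [Real.volume_Icc]; congr 1; ring
          · calc volume _ ≤ volume (Set.Icc (x j - r) (x j + r)) :=
                measure_mono Set.inter_subset_right
              _ = ENNReal.ofReal (2 * r) := by rw [Real.volume_Icc]; congr 1; ring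
      _ = ENNReal.ofReal (∏ j, min (2 * tubeL m a c s j) (2*r)) :=
          (ENNReal.ofReal_prod_of_nonneg (fun j _ => le_min (by
            have : 0 < tubeL m a c s j := by
              rw [tubeL]; split <;> positivity
            positivity) (by positivity))).symm
      _ ≤ ENNReal.ofReal (B ^ (m+1) * (min r s ^ m * min r (s^2))) := by
          apply ENNReal.ofReal_le_ofReal
          rw [Fin.prod_univ_castSucc]
          have hfac1 : ∀ j : Fin m, min (2 * tubeL m a c s (Fin.castSucc j)) (2*r)
              = min (2*(a*s)) (2*r) := by
            intro j; simp only [tubeL, Fin.coe_castSucc, j.isLt, if_true]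
          have hfac2 : tubeL m a c s (Fin.last m) = c*s^2 := by
            simp only [tubeL, Fin.val_last, lt_irrefl, if_false]
          rw [hfac2]
          calc (∏ j : Fin m, min (2 * tubeL m a c s (Fin.castSucc j)) (2*r)) * min (2*(c*s^2)) (2*r)
              = (min (2*(a*s)) (2*r)) ^ m * min (2*(c*s^2)) (2*r) := by
                rw [Finset.prod_congr rfl (fun j _ => hfac1 j), Finset.prod_const, Finset.card_univ,
                  Fintype.card_fin]
            _ ≤ (B * min s r) ^ m * (B * min (s^2) r) := by
                apply mul_le_mul
                · apply pow_le_pow_left₀ (le_min (by positivity) (by positivity))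
                  rw [mul_min_of_nonneg _ _ (by positivity : (0:ℝ) ≤ B)]
                  apply min_le_min
                  · calc 2*(a*s) = (2*a)*s := by ring
                      _ ≤ B*s := mul_le_mul_of_nonneg_right
                          (le_trans (le_max_left _ _) (le_max_right 2 _)) hs0.le
                  · exact mul_le_mul_of_nonneg_right (le_max_left _ _) hr.le
                · rw [mul_min_of_nonneg _ _ (by positivity : (0:ℝ) ≤ B)]
                  apply min_le_min
                  · calc 2*(c*s^2) = (2*c)*s^2 := by ring
                      _ ≤ B*s^2 := mul_le_mul_of_nonneg_right
                          (le_trans (le_max_right _ _) (le_max_right 2 _)) (by positivity)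
                  · exact mul_le_mul_of_nonneg_right (le_max_left _ _) hr.le
                · exact le_min (by positivity) (by positivity)
                · positivity
            _ = B ^ (m+1) * (min r s ^ m * min r (s^2)) := by
                rw [min_comm s r, min_comm (s^2) r, mul_pow]
                ring
  -- step 3: combine
  have hcast : (-((m+1:ℕ):ℝ)) = -((m:ℝ)+1) := by push_cast; ring
  calc ENNReal.ofReal (r ^ α) *
        (ENNReal.ofReal (r ^ (-((m+1:ℕ):ℝ))) * ∫⁻ y in Metric.ball x r, ENNReal.ofReal (V y ^ p)) ^ (1/p)
      ≤ ENNReal.ofReal (r ^ α) *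
        (ENNReal.ofReal (r ^ (-((m:ℝ)+1))) *
          ENNReal.ofReal (B ^ (m+1) * (min r s ^ m * min r (s^2)))) ^ (1/p) := by
        apply mul_le_mul_right
        apply ENNReal.rpow_le_rpow _ (by positivity)
        rw [hcast]
        exact mul_le_mul_right (le_trans (le_of_eq hlint) hvolbound) _
    _ = ENNReal.ofReal (r ^ α * ((r ^ (-((m:ℝ)+1))) * (B ^ (m+1) * (min r s ^ m * min r (s^2)))) ^ (1/p)) := by
        rw [← ENNReal.ofReal_mul (by positivity), ENNReal.ofReal_rpow_of_nonneg (by positivity) (by positivity),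
          ← ENNReal.ofReal_mul (by positivity)]
    _ ≤ ENNReal.ofReal ((max 2 (max (2*a) (2*c))) ^ (((m:ℝ)+1)) * max (s ^ α) (s ^ (2*α - (m:ℝ)/p))) := by
        apply ENNReal.ofReal_le_ofReal
        exact key_real2 m α p s r B hα hp hαp hs hr hB1


/-- **Lemma 3, case of the paraboloid.** Let `n ≥ 2`, `0 < α < 2`,
`1 ≤ p ≤ n/α`. If the weighted extension estimate for the section of the paraboloid
(in Schrödinger form) holds with the Morrey–Campanato norm `𝓛^{α,p}`, then
`1/p ≤ 2(α-1)/(n-1)`. -/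
theorem stmt15 (n : ℕ) (hn : 2 ≤ n) (α p : ℝ) (hα0 : 0 < α) (hα2 : α < 2)
    (hp1 : 1 ≤ p) (hp2 : p ≤ (n : ℝ) / α)
    (h : ∃ C : ℝ, 0 < C ∧
      ∀ F : EuclideanSpace ℝ (Fin (n-1)) → ℂ,
        MemLp F 2 volume →
        (∀ ξ, F ξ ≠ 0 → ∀ j, ξ j ∈ Set.Icc (0 : ℝ) 1) →
      ∀ V : EuclideanSpace ℝ (Fin n) → ℝ, Measurable V → (∀ x, 0 ≤ V x) →
        (∫⁻ z : EuclideanSpace ℝ (Fin n),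
            (‖schrodingerExt n F
                (WithLp.toLp 2 (fun j => z (Fin.castLE (by omega) j)))
                (z ⟨n - 1, by omega⟩)‖₊ : ℝ≥0∞) ^ 2 * ENNReal.ofReal (V z))
          ≤ ENNReal.ofReal C * morreyNorm n α p V *
            ENNReal.ofReal (∫ ξ : EuclideanSpace ℝ (Fin (n-1)), ‖F ξ‖ ^ 2)) :
    1/p ≤ 2 * (α - 1) / ((n : ℝ) - 1) := by
  obtain ⟨m, rfl⟩ : ∃ m : ℕ, n = m + 1 := ⟨n - 1, by omega⟩
  have hm1 : 1 ≤ m := by omega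
  have hm0 : (0:ℝ) < m := by exact_mod_cast hm1
  have hp0 : (0:ℝ) < p := lt_of_lt_of_le one_pos hp1
  obtain ⟨C, hC, hmain⟩ := h
  by_contra hcon
  push_neg at hcon
  have hcon' : 2 * (α - 1) / (m:ℝ) < 1/p := by
    calc 2 * (α - 1) / (m:ℝ) = 2 * (α - 1) / (((m+1:ℕ):ℝ) - 1) := by push_cast; ring_nf
      _ < 1/p := hcon
  set γ : ℝ := min (2 - α) (2 - (2*α - (m:ℝ)/p)) with hγ
  have hγ0 : 0 < γ := by
    apply lt_min (by linarith)
    have h1 : 2 * (α - 1) < (m:ℝ) * (1/p) := by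
      rw [div_lt_iff₀ hm0] at hcon'
      linarith
    have h2 : (m:ℝ)/p = (m:ℝ) * (1/p) := by ring
    rw [h2]; linarith
  set c0 : ℝ := 1/(20*m) with hc0
  set a0 : ℝ := c0/m with ha0
  have hc0pos : 0 < c0 := by rw [hc0]; positivity
  have ha0pos : 0 < a0 := by rw [ha0]; positivity
  set B : ℝ := max 2 (max (2*a0) (2*c0)) with hB
  have hB1 : (1:ℝ) ≤ B := le_trans one_le_two (le_max_left _ _)
  set K₁ : ℝ := (1/4) * (2*a0)^m * (2*c0) with hK₁
  have hK₁pos : 0 < K₁ := by rw [hK₁]; positivity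
  set D : ℝ := C * B^(((m:ℝ)+1)) with hD
  have hDpos : 0 < D := by
    rw [hD]; apply mul_pos hC (Real.rpow_pos_of_pos (by linarith) _)
  have key : ∀ s : ℝ, 1 ≤ s → K₁ * s^2 ≤ D * max (s ^ α) (s ^ (2*α - (m:ℝ)/p)) := by
    intro s hs
    have hs0 : (0:ℝ) < s := lt_of_lt_of_le one_pos hs
    set δ : ℝ := s⁻¹ with hδdef
    have hδ0 : 0 < δ := by rw [hδdef]; positivity
    have hδ1 : δ ≤ 1 := by rw [hδdef]; exact inv_le_one_of_one_le₀ hs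
    have hδs : δ * s = 1 := inv_mul_cancel₀ (ne_of_gt hs0)
    set F : EuclideanSpace ℝ (Fin m) → ℂ := (cubeS m δ).indicator (fun _ => (1:ℂ)) with hF
    set V : EuclideanSpace ℝ (Fin (m+1)) → ℝ :=
      (tubeT m a0 c0 s).indicator (fun _ => (1:ℝ)) with hVdef
    have hFmem : MemLp F 2 volume := by
      apply memLp_indicator_const 2 (cubeS_meas m δ) (1:ℂ) (Or.inr _)
      rw [cubeS_vol m δ hδ0.le]
      exact ENNReal.pow_ne_top ENNReal.ofReal_ne_top
    have hFsupp : ∀ ξ, F ξ ≠ 0 → ∀ j, ξ j ∈ Set.Icc (0:ℝ) 1 := by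
      intro ξ hξ j
      by_cases hmem : ξ ∈ cubeS m δ
      · have := hmem j (Set.mem_univ j)
        simp only [Set.mem_Icc] at this ⊢
        exact ⟨this.1, le_trans this.2 hδ1⟩
      · exfalso; apply hξ; simp [hF, Set.indicator_apply, hmem]
    have hVmeas : Measurable V := measurable_const.indicator (tubeT_meas m a0 c0 s)
    have hVpos : ∀ x, 0 ≤ V x := fun x => Set.indicator_nonneg (fun _ _ => zero_le_one) x
    have hineq := hmain F hFmem hFsupp V hVmeas hVpos
    have hlow : ENNReal.ofReal ((δ^m/2)^2) * volume (tubeT m a0 c0 s)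
        ≤ ∫⁻ z : EuclideanSpace ℝ (Fin (m+1)),
            (‖schrodingerExt (m+1) F
                (WithLp.toLp 2 (fun j => z (Fin.castLE (by omega) j)))
                (z ⟨m + 1 - 1, by omega⟩)‖₊ : ℝ≥0∞) ^ 2 * ENNReal.ofReal (V z) := by
      rw [← lintegral_indicator_const (tubeT_meas m a0 c0 s)]
      apply lintegral_mono
      intro z
      dsimp only
      by_cases hz : z ∈ tubeT m a0 c0 s
      · rw [Set.indicator_of_mem hz]
        have hVz : V z = 1 := by rw [hVdef, Set.indicator_of_mem hz]
        rw [hVz, ENNReal.ofReal_one, mul_one]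
        have hcoords : ∀ j : Fin (m+1), |z j| ≤ tubeL m a0 c0 s j := by
          intro j
          have := hz j (Set.mem_univ j)
          simp only [Set.mem_Icc] at this
          rw [abs_le]; exact this
        set x' : EuclideanSpace ℝ (Fin m) := (WithLp.toLp 2 (fun j => z (Fin.castLE (by omega) j))) with hx'
        have hxnorm : ‖x'‖ ≤ (1/(20*m)) * δ⁻¹ := by
          have hb : ∀ i : Fin m, |x' i| ≤ a0 * s := by
            intro i
            have h3 := hcoords (Fin.castLE (by omega) i)
            rw [tubeL, if_pos (by simpa using i.isLt)] at h3
            exact h3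
          calc ‖x'‖ ≤ (m:ℝ) * (a0 * s) := norm_le_of_coords' m hm1 _ (a0*s) (by positivity) hb
            _ = (1/(20*m)) * δ⁻¹ := by
                rw [ha0, hc0, hδdef, inv_inv]; field_simp
        have htb : |z ⟨m + 1 - 1, by omega⟩| ≤ (1/(20*m)) * δ⁻¹^2 := by
          have h3 := hcoords ⟨m + 1 - 1, by omega⟩
          rw [tubeL] at h3
          simp only [Nat.add_sub_cancel, lt_self_iff_false, if_false] at h3
          calc |z ⟨m + 1 - 1, by omega⟩| ≤ c0 * s^2 := h3
            _ = (1/(20*m)) * δ⁻¹^2 := by rw [hc0, hδdef, inv_inv]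
        have hext := ext_lower m hm1 δ hδ0 x' (z ⟨m + 1 - 1, by omega⟩) hxnorm htb
        have hnorm : δ^m/2 ≤ ‖schrodingerExt (m+1) F x' (z ⟨m + 1 - 1, by omega⟩)‖ := by
          rw [schrodingerExt]
          exact hext
        calc ENNReal.ofReal ((δ^m/2)^2)
            = ENNReal.ofReal (δ^m/2) ^ 2 := by
              rw [← ENNReal.ofReal_pow (by positivity)]
          _ ≤ (‖schrodingerExt (m+1) F
                (WithLp.toLp 2 (fun j => z (Fin.castLE (by omega) j)))
                (z ⟨m + 1 - 1, by omega⟩)‖₊ : ℝ≥0∞) ^ 2 := by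
              apply pow_le_pow_left'
              rw [← enorm_eq_nnnorm, ← ofReal_norm]
              exact ENNReal.ofReal_le_ofReal hnorm
      · rw [Set.indicator_of_notMem hz]
        exact zero_le
    have hFint : ∫ ξ : EuclideanSpace ℝ (Fin m), ‖F ξ‖ ^ 2 = δ^m := by
      have h4 : (fun ξ : EuclideanSpace ℝ (Fin m) => ‖F ξ‖ ^ 2)
          = (cubeS m δ).indicator (fun _ => (1:ℝ)) := by
        funext ξ
        by_cases hmem : ξ ∈ cubeS m δ <;> simp [hF, Set.indicator_apply, hmem]
      rw [h4, integral_indicator_const _ (cubeS_meas m δ), measureReal_def, cubeS_vol m δ hδ0.le]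
      rw [ENNReal.toReal_pow, ENNReal.toReal_ofReal hδ0.le]
      simp
    have hαp' : α * p ≤ (m:ℝ) + 1 := by
      rw [le_div_iff₀ hα0] at hp2
      push_cast at hp2
      linarith
    have hmor := morrey_bound m α p a0 c0 s hα0 hp1 hαp' ha0pos hc0pos hs
    -- assemble: get a real inequality
    set MX : ℝ := max (s ^ α) (s ^ (2*α - (m:ℝ)/p)) with hMX
    have hMXpos : 0 < MX := lt_of_lt_of_le (Real.rpow_pos_of_pos hs0 α) (le_max_left _ _)
    have hBMX : ENNReal.ofReal C * morreyNorm (m+1) α p V * ENNReal.ofReal (δ^m)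
        ≤ ENNReal.ofReal (C * (B ^ (((m:ℝ)+1)) * MX) * δ^m) := by
      rw [ENNReal.ofReal_mul (by positivity), ENNReal.ofReal_mul hC.le]
      exact mul_le_mul' (mul_le_mul' le_rfl hmor) le_rfl
    have hENN : ENNReal.ofReal ((δ^m/2)^2) * volume (tubeT m a0 c0 s)
        ≤ ENNReal.ofReal (C * (B ^ (((m:ℝ)+1)) * MX) * δ^m) := by
      calc ENNReal.ofReal ((δ^m/2)^2) * volume (tubeT m a0 c0 s)
          ≤ _ := hlow
        _ ≤ ENNReal.ofReal C * morreyNorm (m+1) α p V * ENNReal.ofReal (δ^m) := by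
            rw [← hFint]; exact hineq
        _ ≤ _ := hBMX
    rw [tubeT_vol m a0 c0 s] at hENN
    have hENN2 : ENNReal.ofReal ((δ^m/2)^2 * ((2*(a0*s))^m * (2*(c0*s^2))))
        ≤ ENNReal.ofReal (C * (B ^ (((m:ℝ)+1)) * MX) * δ^m) := by
      calc ENNReal.ofReal ((δ^m/2)^2 * ((2*(a0*s))^m * (2*(c0*s^2))))
          = ENNReal.ofReal ((δ^m/2)^2) *
            (ENNReal.ofReal (2*(a0*s)) ^ m * ENNReal.ofReal (2*(c0*s^2))) := by
            rw [ENNReal.ofReal_mul (by positivity), ENNReal.ofReal_mul (by positivity),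
              ← ENNReal.ofReal_pow (by positivity)]
        _ ≤ _ := by rw [← mul_assoc] at hENN ⊢; exact hENN
    have hreal : (δ^m/2)^2 * ((2*(a0*s))^m * (2*(c0*s^2)))
        ≤ C * (B ^ (((m:ℝ)+1)) * MX) * δ^m := by
      have := (ENNReal.ofReal_le_ofReal_iff (by positivity)).mp hENN2
      exact this
    -- multiply by s^m
    have hsm : (0:ℝ) < s^m := by positivity
    have hpow1 : δ^m * s^m = 1 := by rw [← mul_pow, hδs, one_pow]
    have hid : ((δ^m/2)^2 * ((2*(a0*s))^m * (2*(c0*s^2)))) * s^m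
        = (δ^m * s^m)^2 * (K₁ * s^2) := by
      rw [hK₁]; ring
    have hid2 : (C * (B ^ (((m:ℝ)+1)) * MX) * δ^m) * s^m = D * MX * (δ^m * s^m) := by
      rw [hD]; ring
    have := mul_le_mul_of_nonneg_right hreal hsm.le
    rw [hid, hid2, hpow1, one_pow, one_mul, mul_one] at this
    exact this
  -- derive the contradiction
  have hmax_le : ∀ s : ℝ, 1 ≤ s → max (s ^ α) (s ^ (2*α - (m:ℝ)/p)) ≤ s ^ ((2:ℝ) - γ) := by
    intro s hs
    apply max_le
    · apply Real.rpow_le_rpow_of_exponent_le hs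
      have : γ ≤ 2 - α := min_le_left _ _
      linarith
    · apply Real.rpow_le_rpow_of_exponent_le hs
      have : γ ≤ 2 - (2*α - (m:ℝ)/p) := min_le_right _ _
      linarith
  set s₀ : ℝ := max 1 ((D/K₁ + 1) ^ (1/γ)) with hs₀
  have hs₀1 : 1 ≤ s₀ := le_max_left _ _
  have hs₀0 : 0 < s₀ := lt_of_lt_of_le one_pos hs₀1
  have hkey := key s₀ hs₀1
  have hle := hmax_le s₀ hs₀1
  have h5 : K₁ * s₀^2 ≤ D * s₀ ^ ((2:ℝ) - γ) := by
    calc K₁ * s₀^2 ≤ D * max (s₀ ^ α) (s₀ ^ (2*α - (m:ℝ)/p)) := hkey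
      _ ≤ D * s₀ ^ ((2:ℝ) - γ) := mul_le_mul_of_nonneg_left hle hDpos.le
  have h6 : K₁ * s₀ ^ γ ≤ D := by
    have hsplit : (s₀:ℝ) ^ (2:ℝ) = s₀ ^ ((2:ℝ) - γ) * s₀ ^ γ := by
      rw [← Real.rpow_add hs₀0]; ring_nf
    have hs2 : s₀^2 = s₀ ^ (2:ℝ) := by
      rw [← Real.rpow_natCast s₀ 2]; norm_num
    rw [hs2, hsplit] at h5
    have hpos : 0 < s₀ ^ ((2:ℝ) - γ) := Real.rpow_pos_of_pos hs₀0 _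
    apply le_of_mul_le_mul_right _ hpos
    calc (K₁ * s₀ ^ γ) * s₀ ^ ((2:ℝ) - γ) = K₁ * (s₀ ^ ((2:ℝ) - γ) * s₀ ^ γ) := by ring
      _ ≤ D * s₀ ^ ((2:ℝ) - γ) := h5
  have hs₀γ : D/K₁ + 1 ≤ s₀ ^ γ := by
    have h7 : (D/K₁ + 1) ^ (1/γ) ≤ s₀ := le_max_right _ _
    have h8 : ((D/K₁ + 1) ^ (1/γ)) ^ γ ≤ s₀ ^ γ :=
      Real.rpow_le_rpow (Real.rpow_nonneg (by positivity) _) h7 hγ0.le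
    rwa [← Real.rpow_mul (by positivity), one_div_mul_cancel (ne_of_gt hγ0),
      Real.rpow_one] at h8
  have : K₁ * (D/K₁ + 1) ≤ D :=
    le_trans (mul_le_mul_of_nonneg_left hs₀γ hK₁pos.le) h6
  have hfinal : K₁ * (D/K₁ + 1) = D + K₁ := by field_simp
  rw [hfinal] at this
  linarith
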